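/- Let V_η(x) = exp(η‖x‖²) and let L be the Langevin generator for a potential U with ∇U L-Lipschitz and D²U ≥ m·Id outside a ball (so ⟨∇U(x),x⟩ ≥ (m/2)‖x‖² for ‖x‖ ≥ K₂). Then for any η ∈ (0, m/8], the drift inequality L V_η ≤ -2η V_η + b holds, with b = 2η exp(η(K₂² ∨ 4(d+1)/m)) [d + 1 + (2η + L)(K₂² ∨ 4(d+1)/m)]. -/

import Mathlib

open MeasureTheory Real
open scoped BigOperators RealInnerProductSpace

set_option maxHeartbeats 1000000

noncomputable section

abbrev Euc (d : ℕ) := EuclideanSpace ℝ (Fin d)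

/-- Laplacian via the second iterated Fréchet derivative in coordinate directions. -/
def lapl {d : ℕ} (φ : Euc d → ℝ) (x : Euc d) : ℝ :=
  ∑ i : Fin d, iteratedFDeriv ℝ 2 φ x ![EuclideanSpace.single i 1, EuclideanSpace.single i 1]

/-- The Langevin generator `L φ = -⟨∇U, ∇φ⟩ + Δφ`. -/
def gen {d : ℕ} (U φ : Euc d → ℝ) (x : Euc d) : ℝ :=
  - ⟪gradient U x, gradient φ x⟫ + lapl φ x

/-- The Gibbs probability measure `π(dx) ∝ e^{-U(x)} dx`. -/
def gibbs {d : ℕ} (U : Euc d → ℝ) : Measure (Euc d) :=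
  ((∫⁻ x, ENNReal.ofReal (Real.exp (-U x)))⁻¹) •
    ((volume : Measure (Euc d)).withDensity fun x => ENNReal.ofReal (Real.exp (-U x)))

/-- Polynomial growth of the `k`-th derivative. -/
def PolyGrowthD {d : ℕ} (k : ℕ) (f : Euc d → ℝ) : Prop :=
  ∃ (C : ℝ) (p : ℕ), ∀ x, ‖iteratedFDeriv ℝ k f x‖ ≤ C * (1 + ‖x‖) ^ p

lemma hasFDerivAt_V (η : ℝ) {d : ℕ} (y : Euc d) :
    HasFDerivAt (fun z : Euc d => Real.exp (η * ‖z‖ ^ 2))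
      ((2 * η * Real.exp (η * ‖y‖ ^ 2)) • innerSL ℝ y) y := by
  have h1 : HasFDerivAt (fun z : Euc d => η * ‖z‖ ^ 2)
      (η • (2 • innerSL ℝ y)) y :=
    ((hasStrictFDerivAt_norm_sq y).hasFDerivAt).const_mul η
  have h2 := h1.exp
  refine h2.congr_fderiv ?_
  ext v
  simp
  ring

lemma contDiff_V (η : ℝ) {d : ℕ} :
    ContDiff ℝ ⊤ (fun z : Euc d => Real.exp (η * ‖z‖ ^ 2)) :=
  Real.contDiff_exp.comp (contDiff_const.mul (contDiff_norm_sq ℝ))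

lemma gradient_V (η : ℝ) {d : ℕ} (x : Euc d) :
    gradient (fun z : Euc d => Real.exp (η * ‖z‖ ^ 2)) x
      = (2 * η * Real.exp (η * ‖x‖ ^ 2)) • x := by
  have h : HasGradientAt (fun z : Euc d => Real.exp (η * ‖z‖ ^ 2))
      ((2 * η * Real.exp (η * ‖x‖ ^ 2)) • x) x := by
    rw [hasGradientAt_iff_hasFDerivAt]
    refine (hasFDerivAt_V η x).congr_fderiv ?_
    ext v
    simp [real_inner_smul_left]
  exact h.gradient

lemma second_V (η : ℝ) {d : ℕ} (x v : Euc d) :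
    iteratedFDeriv ℝ 2 (fun z : Euc d => Real.exp (η * ‖z‖ ^ 2)) x ![v, v]
      = 2 * η * Real.exp (η * ‖x‖ ^ 2) * (2 * η * ⟪x, v⟫ ^ 2 + ⟪v, v⟫) := by
  set φ : Euc d → ℝ := fun z => Real.exp (η * ‖z‖ ^ 2) with hφ
  have hdiff : DifferentiableAt ℝ (fderiv ℝ φ) x :=
    (((contDiff_V η (d := d)).fderiv_right (m := 1) le_top).differentiable one_ne_zero).differentiableAt
  rw [iteratedFDeriv_two_apply]
  have key : fderiv ℝ (fderiv ℝ φ) x (![v, v] 0) (![v, v] 1)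
      = fderiv ℝ (fun y => fderiv ℝ φ y v) x v := by
    have := fderiv_clm_apply (c := fderiv ℝ φ) (u := fun _ : Euc d => v) hdiff
      (differentiableAt_const v)
    rw [this]
    simp
  rw [key]
  have hfun : (fun y : Euc d => fderiv ℝ φ y v)
      = fun y : Euc d => (2 * η * Real.exp (η * ‖y‖ ^ 2)) * ⟪y, v⟫ := by
    funext y
    rw [(hasFDerivAt_V η y).fderiv]
    simp
  rw [hfun]
  have hc : HasFDerivAt (fun y : Euc d => 2 * η * Real.exp (η * ‖y‖ ^ 2))
      ((2 * η) • ((2 * η * Real.exp (η * ‖x‖ ^ 2)) • innerSL ℝ x)) x :=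
    (hasFDerivAt_V η x).const_mul (2 * η)
  have hg : HasFDerivAt (fun y : Euc d => ⟪y, v⟫) (innerSL ℝ v) x := by
    have h1 : (fun y : Euc d => ⟪y, v⟫) = fun y : Euc d => (innerSL ℝ v) y := by
      funext y; exact (real_inner_comm y v).symm
    rw [h1]
    exact (innerSL ℝ v).hasFDerivAt
  rw [HasFDerivAt.fderiv (f := fun y : Euc d => 2 * η * Real.exp (η * ‖y‖ ^ 2) * ⟪y, v⟫) (hc.mul hg)]
  simp
  ring

lemma lapl_V (η : ℝ) {d : ℕ} (x : Euc d) :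
    lapl (fun z : Euc d => Real.exp (η * ‖z‖ ^ 2)) x
      = 2 * η * Real.exp (η * ‖x‖ ^ 2) * (2 * η * ‖x‖ ^ 2 + d) := by
  unfold lapl
  have h1 : ∀ i : Fin d, ⟪x, EuclideanSpace.single i (1:ℝ)⟫ = x i := by
    intro i; rw [EuclideanSpace.inner_single_right]; simp
  have h2 : ∀ i : Fin d,
      ⟪(EuclideanSpace.single i (1:ℝ) : Euc d), EuclideanSpace.single i (1:ℝ)⟫ = 1 := by
    intro i; rw [EuclideanSpace.inner_single_right]; simp
  have hsum : ∑ i, x i ^ 2 = ‖x‖ ^ 2 := by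
    rw [EuclideanSpace.norm_eq, Real.sq_sqrt (by positivity)]
    simp [Real.norm_eq_abs, sq_abs]
  simp only [second_V, h1, h2]
  have hterm : ∀ i : Fin d, 2*η*Real.exp (η*‖x‖^2)*(2*η*(x i)^2+1)
      = (2*η*Real.exp (η*‖x‖^2)*(2*η))*(x i)^2 + 2*η*Real.exp (η*‖x‖^2) := fun i => by ring
  rw [Finset.sum_congr rfl fun i _ => hterm i, Finset.sum_add_distrib, ← Finset.mul_sum, hsum,
    Finset.sum_const, Finset.card_fin, nsmul_eq_mul]
  ring

theorem stmt_7 {d : ℕ} (U : Euc d → ℝ) (L m K₂ η : ℝ)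
    (hU : ContDiff ℝ 2 U)
    (hLip : ∀ x y, ‖gradient U x - gradient U y‖ ≤ L * ‖x - y‖)
    (h0 : gradient U 0 = 0)
    (hm : 0 < m) (hmL : m ≤ L) (hK₂ : 0 ≤ K₂)
    (hdrift : ∀ x : Euc d, K₂ ≤ ‖x‖ → (m/2) * ‖x‖ ^ 2 ≤ ⟪gradient U x, x⟫)
    (hη : η ∈ Set.Ioc 0 (m/8)) :
    ∀ x : Euc d, gen U (fun y => Real.exp (η * ‖y‖ ^ 2)) x
      ≤ -(2*η) * Real.exp (η * ‖x‖ ^ 2)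
        + 2*η * Real.exp (η * max (K₂ ^ 2) (4*((d:ℝ)+1)/m))
          * ((d:ℝ) + 1 + (2*η + L) * max (K₂ ^ 2) (4*((d:ℝ)+1)/m)) := by
  obtain ⟨hη0, hη8⟩ := hη
  intro x
  have hLpos : (0:ℝ) < L := lt_of_lt_of_le hm hmL
  set R : ℝ := max (K₂ ^ 2) (4*((d:ℝ)+1)/m) with hRdef
  set e : ℝ := Real.exp (η * ‖x‖ ^ 2) with hedef
  have hepos : (0:ℝ) < e := Real.exp_pos _
  have hRnn : 0 ≤ R := le_max_of_le_left (by positivity)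
  have hgen : gen U (fun y => Real.exp (η * ‖y‖ ^ 2)) x
      = 2*η*e*((d:ℝ) + 2*η*‖x‖^2 - ⟪gradient U x, x⟫) := by
    unfold gen
    rw [gradient_V η x, lapl_V η x, real_inner_smul_right]
    ring
  have hfacnn : 0 ≤ (d:ℝ) + 1 + (2*η + L) * R := by
    have h1 : 0 ≤ (2*η + L) * R := mul_nonneg (by linarith) hRnn
    have h2 : (0:ℝ) ≤ (d:ℝ) := Nat.cast_nonneg d
    linarith
  rcases le_or_gt (‖x‖^2) R with hcase | hcase
  · -- small x
    have hgn : ‖gradient U x‖ ≤ L * ‖x‖ := by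
      have := hLip x 0
      simpa [h0] using this
    have hA : -⟪gradient U x, x⟫ ≤ L * ‖x‖^2 := by
      have h1 := abs_real_inner_le_norm (gradient U x) x
      have h2 : -⟪gradient U x, x⟫ ≤ |⟪gradient U x, x⟫| := neg_le_abs _
      nlinarith [norm_nonneg x]
    have t1 : (d:ℝ) + 2*η*‖x‖^2 - ⟪gradient U x, x⟫ ≤ (d:ℝ) + (2*η+L)*R := by
      have h3 : 0 ≤ (2*η + L) * (R - ‖x‖^2) := mul_nonneg (by linarith) (by linarith)
      nlinarith
    have t2 : 2*η*e*((d:ℝ) + 2*η*‖x‖^2 - ⟪gradient U x, x⟫)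
        ≤ 2*η*e*((d:ℝ) + (2*η+L)*R) :=
      mul_le_mul_of_nonneg_left t1 (by positivity)
    have hee : e ≤ Real.exp (η * R) := by
      rw [hedef]
      exact Real.exp_le_exp.mpr (mul_le_mul_of_nonneg_left hcase hη0.le)
    have t3 : (2*η*e) * ((d:ℝ) + 1 + (2*η+L)*R)
        ≤ (2*η*Real.exp (η * R)) * ((d:ℝ) + 1 + (2*η+L)*R) :=
      mul_le_mul_of_nonneg_right
        (mul_le_mul_of_nonneg_left hee (by linarith)) hfacnn
    rw [hgen]
    nlinarith [t2, t3]
  · -- large x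
    have hxsq : K₂^2 ≤ ‖x‖^2 := le_trans (le_max_left _ _) hcase.le
    have hK : K₂ ≤ ‖x‖ := by nlinarith [norm_nonneg x]
    have hA := hdrift x hK
    have h4 : 4*((d:ℝ)+1)/m ≤ ‖x‖^2 := le_trans (le_max_right _ _) hcase.le
    have h5 : 4*((d:ℝ)+1) ≤ m * ‖x‖^2 := by
      rw [div_le_iff₀ hm] at h4; linarith
    have hfac : (d:ℝ) + 2*η*‖x‖^2 - ⟪gradient U x, x⟫ ≤ -1 := by
      nlinarith [sq_nonneg ‖x‖]
    have hBnn : 0 ≤ 2*η * Real.exp (η * R) * ((d:ℝ) + 1 + (2*η + L) * R) :=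
      mul_nonneg (by positivity) hfacnn
    rw [hgen]
    have h2e : (0:ℝ) ≤ 2*η*e := mul_nonneg (by linarith) hepos.le
    have hmul := mul_le_mul_of_nonneg_left hfac h2e
    nlinarith [hmul, hBnn]
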